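/- Let 𝒞 be a Z2Z4-additive code of type (α,β;γ,δ;κ) and C = Φ(𝒞), and suppose ker(C) = γ+2δ−k̄ with k̄ ∈ {2,…,δ}. Then there exist elements v₁,…,v_k̄ ∈ 𝒞 of order four such that C = ⋃_{I ⊆ {1,…,k̄}} (K(C) + Φ(v_I)), where v_I = Σ_{i∈I} v_i (and v_∅ = 0), and these 2^k̄ cosets of K(C) are pairwise distinct. -/

import Mathlib

/-- The ambient group `Z2^α × Z4^β`, with componentwise ring structure
(so `u * v` is the componentwise product). -/
abbrev Amb (α β : ℕ) := (Fin α → ZMod 2) × (Fin β → ZMod 4)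

/-- The binary space `Z2^α × (Z2²)^β ≅ Z2^(α+2β)`. -/
abbrev Bin (α β : ℕ) := (Fin α → ZMod 2) × (Fin β → ZMod 2 × ZMod 2)

/-- The Gray map `φ : Z4 → Z2²` with `φ(0)=(0,0), φ(1)=(0,1), φ(2)=(1,1), φ(3)=(1,0)`. -/
def grayPair (y : ZMod 4) : ZMod 2 × ZMod 2 :=
  match y.val with
  | 0 => (0, 0)
  | 1 => (0, 1)
  | 2 => (1, 1)
  | _ => (1, 0)

/-- The extended Gray map `Φ : Z2^α × Z4^β → Z2^(α+2β)`. -/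
def Phi {α β : ℕ} (u : Amb α β) : Bin α β :=
  (u.1, fun i => grayPair (u.2 i))

/-- The kernel `K(C) = {x | x + C = C}` of a binary code. -/
def kernelK {α β : ℕ} (C : Set (Bin α β)) : Set (Bin α β) :=
  {x | (fun y => x + y) '' C = C}

/-- The rank of a binary code: the `Z2`-dimension of its linear span. -/
noncomputable def rankOf {α β : ℕ} (C : Set (Bin α β)) : ℕ :=
  Module.finrank (ZMod 2) (Submodule.span (ZMod 2) C)

/-- The dimension of the kernel of a binary code. -/
noncomputable def kerDim {α β : ℕ} (C : Set (Bin α β)) : ℕ :=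
  Module.finrank (ZMod 2) (Submodule.span (ZMod 2) (kernelK C))

/-- A `Z2Z4`-additive code `C ⊆ Z2^α × Z4^β` is of type `(α,β;γ,δ;κ)`:
`|C| = 2^(γ+2δ)`, the number of elements `x` with `2x = 0` is `2^(γ+δ)`, and `κ` is the
`Z2`-dimension of the projection onto the first `α` coordinates of `{x ∈ C | 2x = 0}`. -/
def IsTypeOf (α β γ δ κ : ℕ) (C : AddSubgroup (Amb α β)) : Prop :=
  Nat.card C = 2 ^ (γ + 2 * δ) ∧
  Nat.card {x : Amb α β | x ∈ C ∧ 2 • x = 0} = 2 ^ (γ + δ) ∧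
  Module.finrank (ZMod 2)
    (Submodule.span (ZMod 2) (Prod.fst '' {x : Amb α β | x ∈ C ∧ 2 • x = 0})) = κ

namespace Z2Z4Aux

variable {α β : ℕ}

/-! ### Pointwise facts about the Gray map, proved by `decide`. -/

lemma gray_add4 : ∀ a b : ZMod 4,
    grayPair a + grayPair b = grayPair (a + b + 2 • (a * b)) := by decide

lemma gray_add2 : ∀ a b : ZMod 2, a + b + 2 • (a * b) = a + b := by decide

def grayInv (p : ZMod 2 × ZMod 2) : ZMod 4 :=
  (((p.1.val + p.2.val) % 2 + 2 * p.1.val : ℕ) : ZMod 4)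

lemma grayInv_gray : ∀ a : ZMod 4, grayInv (grayPair a) = a := by decide

lemma gray_grayInv : ∀ p : ZMod 2 × ZMod 2, grayPair (grayInv p) = p := by decide

lemma gray_zero : grayPair 0 = 0 := by decide

/-! ### The extended Gray map -/

lemma Phi_add (x y : Amb α β) : Phi x + Phi y = Phi (x + y + 2 • (x * y)) := by
  refine Prod.ext ?_ ?_
  · funext i; exact (gray_add2 (x.1 i) (y.1 i)).symm
  · funext i; exact gray_add4 (x.2 i) (y.2 i)

lemma Phi_zero : Phi (0 : Amb α β) = 0 := by
  refine Prod.ext rfl ?_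
  funext i; exact gray_zero

def PhiInv (p : Bin α β) : Amb α β := (p.1, fun i => grayInv (p.2 i))

lemma PhiInv_Phi (u : Amb α β) : PhiInv (Phi u) = u := by
  refine Prod.ext rfl ?_
  funext i; exact grayInv_gray (u.2 i)

lemma Phi_PhiInv (p : Bin α β) : Phi (PhiInv p) = p := by
  refine Prod.ext rfl ?_
  funext i; exact gray_grayInv (p.2 i)

lemma Phi_inj : Function.Injective (Phi (α := α) (β := β)) :=
  Function.LeftInverse.injective PhiInv_Phi

/-! ### small algebraic identities in the ambient group -/

lemma amb_four_torsion (w : Amb α β) : 2 • (2 • w) = 0 := by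
  have h2 : ∀ a : ZMod 2, 2 • (2 • a) = 0 := by decide
  have h4 : ∀ a : ZMod 4, 2 • (2 • a) = 0 := by decide
  refine Prod.ext ?_ ?_ <;> funext i
  · exact h2 (w.1 i)
  · exact h4 (w.2 i)

lemma bin_add_self (z : Bin α β) : z + z = 0 := by
  have h2 : ∀ a : ZMod 2, a + a = 0 := by decide
  have hp : ∀ a : ZMod 2 × ZMod 2, a + a = 0 := by decide
  refine Prod.ext ?_ ?_ <;> funext i
  · exact h2 (z.1 i)
  · exact hp (z.2 i)

lemma amb_key_id (v u : Amb α β) :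
    (v + u) + v + 2 • ((v + u) * v) = u + 2 • (u * v) := by
  have h2 : ∀ a b : ZMod 2, (a + b) + a + 2 • ((a + b) * a) = b + 2 • (b * a) := by decide
  have h4 : ∀ a b : ZMod 4, (a + b) + a + 2 • ((a + b) * a) = b + 2 • (b * a) := by decide
  refine Prod.ext ?_ ?_ <;> funext i
  · exact h2 (v.1 i) (u.1 i)
  · exact h4 (v.2 i) (u.2 i)

lemma amb_mul_two_smul (u w : Amb α β) : 2 • (u * (2 • w)) = 0 := by
  have h2 : ∀ a b : ZMod 2, 2 • (a * (2 • b)) = 0 := by decide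
  have h4 : ∀ a b : ZMod 4, 2 • (a * (2 • b)) = 0 := by decide
  refine Prod.ext ?_ ?_ <;> funext i
  · exact h2 (u.1 i) (w.1 i)
  · exact h4 (u.2 i) (w.2 i)

lemma Phi_add_two_torsion (u w : Amb α β) :
    Phi u + Phi (2 • w) = Phi (u + 2 • w) := by
  rw [Phi_add]
  congr 1
  rw [amb_mul_two_smul, add_zero]

/-! ### The kernel as a subgroup, and the subgroup `K_𝒞 ⊆ 𝒞` -/

variable (C : AddSubgroup (Amb α β))

/-- The preimage of the kernel inside the code: `{u ∈ C | ∀ z ∈ C, 2(u*z) ∈ C}`. -/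
def KC : AddSubgroup (Amb α β) where
  carrier := {u | u ∈ C ∧ ∀ z ∈ C, 2 • (u * z) ∈ C}
  zero_mem' := ⟨C.zero_mem, fun z _ => by rw [zero_mul, smul_zero]; exact C.zero_mem⟩
  add_mem' := fun {a b} ha hb => ⟨C.add_mem ha.1 hb.1, fun z hz => by
    rw [add_mul, smul_add]; exact C.add_mem (ha.2 z hz) (hb.2 z hz)⟩
  neg_mem' := fun {a} ha => ⟨C.neg_mem ha.1, fun z hz => by
    rw [neg_mul, smul_neg]; exact C.neg_mem (ha.2 z hz)⟩

lemma KC_le : KC C ≤ C := fun _ hu => hu.1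

lemma mem_KC_of_two_torsion {w : Amb α β} (hw : w ∈ C) (h2 : 2 • w = 0) : w ∈ KC C :=
  ⟨hw, fun z _ => by rw [← smul_mul_assoc, h2, zero_mul]; exact C.zero_mem⟩

lemma two_smul_mem_KC {c : Amb α β} (hc : c ∈ C) : 2 • c ∈ KC C :=
  mem_KC_of_two_torsion C (AddSubgroup.nsmul_mem C hc 2) (amb_four_torsion c)

/-! ### Basic properties of the kernel -/

lemma zero_mem_B : (0 : Bin α β) ∈ Phi '' (C : Set (Amb α β)) :=
  ⟨0, C.zero_mem, Phi_zero⟩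

lemma kernel_add_mem {x : Bin α β} (hx : x ∈ kernelK (Phi '' (C : Set (Amb α β))))
    {b : Bin α β} (hb : b ∈ Phi '' (C : Set (Amb α β))) :
    x + b ∈ Phi '' (C : Set (Amb α β)) := by
  have : x + b ∈ (fun y => x + y) '' (Phi '' (C : Set (Amb α β))) := ⟨b, hb, rfl⟩
  rwa [hx] at this

lemma kernel_subset : kernelK (Phi '' (C : Set (Amb α β))) ⊆ Phi '' (C : Set (Amb α β)) := by
  intro x hx
  have := kernel_add_mem C hx (zero_mem_B C)
  rwa [add_zero] at this

lemma mem_kernel_of_forall {x : Bin α β}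
    (hx : ∀ b ∈ Phi '' (C : Set (Amb α β)), x + b ∈ Phi '' (C : Set (Amb α β))) :
    x ∈ kernelK (Phi '' (C : Set (Amb α β))) := by
  set B := Phi '' (C : Set (Amb α β)) with hB
  have hsub : (fun y => x + y) '' B ⊆ B := by
    rintro _ ⟨b, hb, rfl⟩; exact hx b hb
  exact Set.eq_of_subset_of_ncard_le hsub
    (le_of_eq (Set.ncard_image_of_injective B (add_right_injective x)).symm) (Set.toFinite B)

lemma kernel_zero_mem : (0 : Bin α β) ∈ kernelK (Phi '' (C : Set (Amb α β))) :=
  mem_kernel_of_forall C (fun b hb => by rwa [zero_add])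

lemma kernel_add {x y : Bin α β} (hx : x ∈ kernelK (Phi '' (C : Set (Amb α β))))
    (hy : y ∈ kernelK (Phi '' (C : Set (Amb α β)))) :
    x + y ∈ kernelK (Phi '' (C : Set (Amb α β))) :=
  mem_kernel_of_forall C (fun b hb => by
    rw [add_assoc]; exact kernel_add_mem C hx (kernel_add_mem C hy hb))

/-- Main characterization: `Φ(u) ∈ K(C)` iff `u ∈ K_𝒞`. -/
lemma mem_KC_iff (u : Amb α β) :
    u ∈ KC C ↔ Phi u ∈ kernelK (Phi '' (C : Set (Amb α β))) := by
  constructor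
  · intro hu
    refine mem_kernel_of_forall C ?_
    rintro _ ⟨z, hz, rfl⟩
    rw [Phi_add]
    exact ⟨_, C.add_mem (C.add_mem hu.1 hz) (hu.2 z hz), rfl⟩
  · intro hu
    obtain ⟨u', hu', huu⟩ := kernel_subset C hu
    have huC : u ∈ C := by rwa [Phi_inj huu] at hu'
    refine ⟨huC, fun z hz => ?_⟩
    have hmem : Phi u + Phi z ∈ Phi '' (C : Set (Amb α β)) :=
      kernel_add_mem C hu ⟨z, hz, rfl⟩
    rw [Phi_add] at hmem
    obtain ⟨w, hw, hww⟩ := hmem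
    have : w = u + z + 2 • (u * z) := Phi_inj hww
    have h3 : u + z + 2 • (u * z) ∈ C := this ▸ hw
    have := C.sub_mem (C.sub_mem h3 huC) hz
    have heq : u + z + 2 • (u * z) - u - z = 2 • (u * z) := by abel
    rwa [heq] at this

lemma kernel_eq_image :
    kernelK (Phi '' (C : Set (Amb α β))) = Phi '' (KC C : Set (Amb α β)) := by
  ext x
  constructor
  · intro hx
    obtain ⟨u, hu, rfl⟩ := kernel_subset C hx
    exact ⟨u, (mem_KC_iff C u).2 hx, rfl⟩
  · rintro ⟨u, hu, rfl⟩
    exact (mem_KC_iff C u).1 hu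

/-- Coset correspondence lemma: for `v ∈ C`,
`Φ(v + K_𝒞) = K(C) + Φ(v)`. -/
lemma coset_correspondence {v : Amb α β} (hv : v ∈ C) :
    Phi '' ((fun u => v + u) '' (KC C : Set (Amb α β))) =
      (fun x => x + Phi v) '' kernelK (Phi '' (C : Set (Amb α β))) := by
  set B := Phi '' (C : Set (Amb α β)) with hB
  have hsub : Phi '' ((fun u => v + u) '' (KC C : Set (Amb α β))) ⊆
      (fun x => x + Phi v) '' kernelK B := by
    rintro _ ⟨_, ⟨u, hu, rfl⟩, rfl⟩
    refine ⟨Phi (v + u) + Phi v, ?_, ?_⟩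
    · have hcalc : Phi (v + u) + Phi v = Phi u + Phi (2 • (u * v)) := by
        rw [Phi_add, amb_key_id, ← Phi_add_two_torsion]
      rw [hcalc]
      refine kernel_add C ((mem_KC_iff C u).1 hu) ((mem_KC_iff C _).1 ?_)
      exact mem_KC_of_two_torsion C (hu.2 v hv) (amb_four_torsion (u * v))
    · show Phi (v + u) + Phi v + Phi v = Phi (v + u)
      rw [add_assoc, bin_add_self, add_zero]
  apply Set.eq_of_subset_of_ncard_le hsub
  rw [Set.ncard_image_of_injective _ (add_left_injective (Phi v)),
      kernel_eq_image C,
      Set.ncard_image_of_injective _ Phi_inj,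
      Set.ncard_image_of_injective _ Phi_inj,
      Set.ncard_image_of_injective _ (add_right_injective v)]

end Z2Z4Aux

open Z2Z4Aux in
/-- if `ker(C) = γ+2δ−k̄` with `2 ≤ k̄ ≤ δ`, then there are order-four
codewords `v₁,…,v_k̄` such that `C` is the disjoint union of the `2^k̄` cosets
`K(C) + Φ(v_I)`, `I ⊆ {1,…,k̄}`. -/
theorem code_eq_union_kernel_cosets (α β γ δ κ kb : ℕ) (C : AddSubgroup (Amb α β))
    (h : IsTypeOf α β γ δ κ C) (hk2 : 2 ≤ kb) (hkδ : kb ≤ δ)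
    (hker : kerDim (Phi '' (C : Set (Amb α β))) + kb = γ + 2 * δ) :
    ∃ v : Fin kb → Amb α β,
      (∀ i, v i ∈ C ∧ 2 • v i ≠ 0) ∧
      (Phi '' (C : Set (Amb α β)) =
        ⋃ I : Finset (Fin kb),
          (fun x => x + Phi (∑ i ∈ I, v i)) '' kernelK (Phi '' (C : Set (Amb α β)))) ∧
      (∀ I J : Finset (Fin kb), I ≠ J →
        (fun x => x + Phi (∑ i ∈ I, v i)) '' kernelK (Phi '' (C : Set (Amb α β))) ≠
          (fun x => x + Phi (∑ i ∈ J, v i)) '' kernelK (Phi '' (C : Set (Amb α β)))) := by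
  classical
  set B := Phi '' (C : Set (Amb α β)) with hBdef
  set H := (KC C).addSubgroupOf C with hHdef
  letI : Module (ZMod 2) (↥C ⧸ H) := QuotientAddGroup.zmodModule (n := 2) (by
    intro x
    rw [hHdef, AddSubgroup.mem_addSubgroupOf]
    have : ((2 • x : ↥C) : Amb α β) = 2 • (x : Amb α β) := by push_cast; ring
    rw [this]
    exact two_smul_mem_KC C x.2)
  -- cardinality of K_𝒞
  have hKC_card : Nat.card (KC C) = 2 ^ kerDim B := by
    let Ksub : Submodule (ZMod 2) (Bin α β) :=
      { carrier := kernelK B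
        add_mem' := fun hx hy => kernel_add C hx hy
        zero_mem' := kernel_zero_mem C
        smul_mem' := by
          intro c x hx
          have hc : c = 0 ∨ c = 1 := by revert c; decide
          rcases hc with rfl | rfl
          · rw [zero_smul]; exact kernel_zero_mem C
          · rw [one_smul]; exact hx }
    have hspan : Submodule.span (ZMod 2) (kernelK B) = Ksub := by
      have : (Ksub : Set (Bin α β)) = kernelK B := rfl
      rw [← this, Submodule.span_eq]
    have hcard1 : Nat.card ↥Ksub = 2 ^ kerDim B := by
      haveI := Fintype.ofFinite ↥Ksub
      rw [Nat.card_eq_fintype_card, Module.card_eq_pow_finrank (K := ZMod 2) (V := ↥Ksub), ZMod.card]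
      congr 1
      rw [kerDim, hspan]
    have hcard2 : Nat.card ↥Ksub = Nat.card ↥(kernelK B) :=
      Nat.card_congr ⟨fun x => ⟨x.1, x.2⟩, fun x => ⟨x.1, x.2⟩, fun _ => rfl, fun _ => rfl⟩
    have hcard3 : Nat.card ↥(kernelK B) = Nat.card (KC C) := by
      rw [Nat.card_coe_set_eq, hBdef, kernel_eq_image C,
        Set.ncard_image_of_injective _ Phi_inj]
      exact (Nat.card_coe_set_eq _).symm
    rw [← hcard3, ← hcard2, hcard1]
  -- cardinality of the quotient
  have hcardW : Nat.card (↥C ⧸ H) = 2 ^ kb := by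
    have h1 := AddSubgroup.card_eq_card_quotient_mul_card_addSubgroup H
    have h2 : Nat.card ↥H = 2 ^ kerDim B := by
      rw [hHdef, Nat.card_congr (AddSubgroup.addSubgroupOfEquivOfLe (KC_le C)).toEquiv]
      exact hKC_card
    rw [h.1, h2, ← hker, pow_add, mul_comm (2 ^ kerDim B)] at h1
    exact (Nat.eq_of_mul_eq_mul_right (pow_pos two_pos _) h1).symm
  -- finrank of the quotient
  have hfr : Module.finrank (ZMod 2) (↥C ⧸ H) = kb := by
    have hc : Nat.card (↥C ⧸ H) = 2 ^ Module.finrank (ZMod 2) (↥C ⧸ H) := by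
      haveI := Fintype.ofFinite (↥C ⧸ H)
      rw [Nat.card_eq_fintype_card, Module.card_eq_pow_finrank (K := ZMod 2), ZMod.card]
    exact Nat.pow_right_injective (le_refl 2) (hc.symm.trans hcardW)
  let bW : Module.Basis (Fin kb) (ZMod 2) (↥C ⧸ H) := Module.finBasisOfFinrankEq (ZMod 2) _ hfr
  -- lifts of the basis vectors
  let vC : Fin kb → ↥C := fun i => (bW i).out
  let v : Fin kb → Amb α β := fun i => ((vC i : Amb α β))
  have hmk : ∀ i, QuotientAddGroup.mk (s := H) (vC i) = bW i :=
    fun i => QuotientAddGroup.out_eq' (bW i)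
  have hmksum : ∀ I : Finset (Fin kb),
      QuotientAddGroup.mk (s := H) (∑ i ∈ I, vC i) = ∑ i ∈ I, bW i := by
    intro I
    rw [← QuotientAddGroup.mk'_apply, map_sum]
    exact Finset.sum_congr rfl fun i _ => by rw [QuotientAddGroup.mk'_apply]; exact hmk i
  have hsumv : ∀ I : Finset (Fin kb),
      (∑ i ∈ I, v i) = ((∑ i ∈ I, vC i : ↥C) : Amb α β) :=
    fun I => (map_sum C.subtype _ _).symm
  -- surjectivity of subset sums onto the quotient
  have hsurj : ∀ w : ↥C ⧸ H, ∃ I : Finset (Fin kb), w = ∑ i ∈ I, bW i := by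
    intro w
    refine ⟨Finset.univ.filter (fun i => bW.repr w i = 1), ?_⟩
    calc w = ∑ i, bW.repr w i • bW i := (bW.sum_repr w).symm
      _ = ∑ i ∈ Finset.univ.filter (fun i => bW.repr w i = 1), bW i := by
          rw [Finset.sum_filter]
          refine Finset.sum_congr rfl fun i _ => ?_
          have hc : bW.repr w i = 0 ∨ bW.repr w i = 1 := by
            have : ∀ c : ZMod 2, c = 0 ∨ c = 1 := by decide
            exact this _
          rcases hc with hc | hc <;> rw [hc] <;> simp
  -- injectivity of subset sums
  have hinj : ∀ I J : Finset (Fin kb), (∑ i ∈ I, bW i) = ∑ i ∈ J, bW i → I = J := by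
    have key : ∀ (I : Finset (Fin kb)) (j : Fin kb),
        bW.repr (∑ i ∈ I, bW i) j = if j ∈ I then 1 else 0 := by
      intro I j
      rw [map_sum, Finsupp.finset_sum_apply]
      simp only [Module.Basis.repr_self]
      rw [Finset.sum_congr rfl fun i _ => Finsupp.single_apply, Finset.sum_ite_eq' I j]
    intro I J hIJ
    ext j
    have hh := congrArg (fun w => bW.repr w j) hIJ
    simp only [key] at hh
    by_cases hI : j ∈ I <;> by_cases hJ : j ∈ J <;> simp [hI, hJ] at hh ⊢
  -- key membership correspondence
  have hmemcoset : ∀ (c : ↥C) (I : Finset (Fin kb)),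
      Phi (c : Amb α β) ∈ (fun x => x + Phi (∑ i ∈ I, v i)) '' kernelK B ↔
        QuotientAddGroup.mk (s := H) c = ∑ i ∈ I, bW i := by
    intro c I
    set sI : ↥C := ∑ i ∈ I, vC i with hsIdef
    rw [hsumv I, hBdef, ← coset_correspondence C sI.2, Phi_inj.mem_set_image, ← hmksum I]
    constructor
    · rintro ⟨u, hu, heq⟩
      symm
      rw [QuotientAddGroup.eq, hHdef, AddSubgroup.mem_addSubgroupOf]
      have hcoe : ((-sI + c : ↥C) : Amb α β) = -(sI : Amb α β) + (c : Amb α β) := by simp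
      have huval : ((-sI + c : ↥C) : Amb α β) = u := by
        rw [hcoe, ← heq]
        exact neg_add_cancel_left _ _
      rw [huval]
      exact hu
    · intro hc
      have hmem := (QuotientAddGroup.eq).1 hc.symm
      rw [hHdef, AddSubgroup.mem_addSubgroupOf] at hmem
      refine ⟨((-sI + c : ↥C) : Amb α β), hmem, ?_⟩
      have hcoe : ((-sI + c : ↥C) : Amb α β) = -(sI : Amb α β) + (c : Amb α β) := by simp
      show (sI : Amb α β) + _ = _
      rw [hcoe]
      exact add_neg_cancel_left _ _
  refine ⟨v, ?_, ?_, ?_⟩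
  · -- order four
    intro i
    refine ⟨(vC i).2, fun h0 => ?_⟩
    have hvH : vC i ∈ H := by
      rw [hHdef, AddSubgroup.mem_addSubgroupOf]
      exact mem_KC_of_two_torsion C (vC i).2 h0
    have hz : QuotientAddGroup.mk (s := H) (vC i) = 0 :=
      (QuotientAddGroup.eq_zero_iff _).2 hvH
    exact bW.ne_zero i ((hmk i).symm.trans hz)
  · -- the union
    ext x
    simp only [Set.mem_iUnion]
    constructor
    · rintro ⟨cval, hcval, rfl⟩
      obtain ⟨I, hI⟩ := hsurj (QuotientAddGroup.mk (s := H) ⟨cval, hcval⟩)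
      exact ⟨I, (hmemcoset ⟨cval, hcval⟩ I).2 hI⟩
    · rintro ⟨I, hx⟩
      rw [hsumv I, hBdef, ← coset_correspondence C (∑ i ∈ I, vC i).2] at hx
      obtain ⟨_, ⟨u, hu, rfl⟩, rfl⟩ := hx
      exact ⟨_, C.add_mem (∑ i ∈ I, vC i).2 (KC_le C hu), rfl⟩
  · -- distinctness
    intro I J hIJ hEq
    refine hIJ (hinj I J ?_)
    have h1 : Phi (∑ i ∈ I, v i) ∈ (fun x => x + Phi (∑ i ∈ I, v i)) '' kernelK B :=
      ⟨0, kernel_zero_mem C, zero_add _⟩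
    rw [hEq] at h1
    rw [hsumv I] at h1
    have hA := (hmemcoset (∑ i ∈ I, vC i) J).1 h1
    exact (hmksum I).symm.trans hA
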